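/- Let (X,F) be a symmetric n-ary band and B its associated binary operation. The following are equivalent: (i) the map x ↦ ℓ_x from X to the set of self-maps of X is injective; (ii) B is commutative (so (X,B) is a semilattice); (iii) F is the n-ary extension of B, i.e., F = B^{n−1}. -/

import Mathlib

namespace NaryBand

variable {X : Type*}

/-- Replace the window of length `n` starting at position `i` (0-based) of the
`(2*n-1)`-tuple `x` by the value of `F` on that window. -/
def contract {n : ℕ} (F : (Fin n → X) → X) (i : ℕ) (hn : 2 ≤ n) (hi : i ≤ n - 1)
    (x : Fin (2 * n - 1) → X) : Fin n → X :=
  fun j =>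
    if _h1 : (j : ℕ) < i then x ⟨(j : ℕ), by have := j.isLt; omega⟩
    else if _h2 : (j : ℕ) = i then
      F (fun k => x ⟨i + (k : ℕ), by have := k.isLt; omega⟩)
    else x ⟨(j : ℕ) + n - 1, by have := j.isLt; omega⟩

/-- `F` is an associative `n`-ary operation. -/
def NAssoc {n : ℕ} (hn : 2 ≤ n) (F : (Fin n → X) → X) : Prop :=
  ∀ (i : ℕ) (hi : i + 1 ≤ n - 1) (x : Fin (2 * n - 1) → X),
    F (contract F i hn (by omega) x) = F (contract F (i + 1) hn (by omega) x)

/-- `F` is a symmetric `n`-ary operation. -/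
def NSym {n : ℕ} (F : (Fin n → X) → X) : Prop :=
  ∀ (σ : Equiv.Perm (Fin n)) (x : Fin n → X), F (x ∘ σ) = F x

/-- `F` is an idempotent `n`-ary operation. -/
def NIdem {n : ℕ} (F : (Fin n → X) → X) : Prop :=
  ∀ x : X, F (fun _ => x) = x

/-- The associated binary operation `B(x,y) = F(x,…,x,y)` (with `n-1` copies of `x`). -/
def assocB {n : ℕ} (F : (Fin n → X) → X) (x y : X) : X :=
  F (fun j => if (j : ℕ) < n - 1 then x else y)

/-- The map `ℓ_x : y ↦ B(x,y)`. -/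
def ell {n : ℕ} (F : (Fin n → X) → X) (x : X) : X → X :=
  fun y => assocB F x y

/-- The `n`-ary extension `G^{n-1}(x₁,…,xₙ) = G(x₁, G(x₂, …, G(x_{n-1}, xₙ)…))`
of a binary operation `G`. -/
def nExt {n : ℕ} (hn : 1 ≤ n) (G : X → X → X) (x : Fin n → X) : X :=
  (List.ofFn (fun i : Fin (n - 1) => x ⟨(i : ℕ), by have := i.isLt; omega⟩)).foldr G
    (x ⟨n - 1, by omega⟩)

/-- The relation `σ`: `x σ y` iff `B(x,y) = y` and `B(y,x) = x`. -/
def sigmaRel {n : ℕ} (F : (Fin n → X) → X) (x y : X) : Prop :=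
  assocB F x y = y ∧ assocB F y x = x

/-- `(A, mul)` is an abelian group with identity `e` and inversion `inv`. -/
def IsAbelianGroup {A : Type*} (mul : A → A → A) (e : A) (inv : A → A) : Prop :=
  (∀ a b c, mul (mul a b) c = mul a (mul b c)) ∧
  (∀ a b, mul a b = mul b a) ∧
  (∀ a, mul e a = a) ∧
  (∀ a, mul (inv a) a = e)

/-- `k`-fold product `a * ⋯ * a` with respect to `mul` (with `powMul mul e 0 a = e`). -/
def powMul {A : Type*} (mul : A → A → A) (e : A) : ℕ → A → A
  | 0, _ => e
  | k + 1, a => mul a (powMul mul e k a)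

end NaryBand

namespace NaryBand

variable {X : Type*}


variable {n : ℕ}

/-- embedding of `Fin n` as the first `n` coordinates of `Fin (2*n-1)` -/
def embF (hn : 2 ≤ n) (k : Fin n) : Fin (2 * n - 1) :=
  ⟨(k : ℕ), by have := k.isLt; omega⟩

/-- embedding of `Fin n` as the last `n` coordinates of `Fin (2*n-1)` -/
def embB (hn : 2 ≤ n) (k : Fin n) : Fin (2 * n - 1) :=
  ⟨n - 1 + (k : ℕ), by have := k.isLt; omega⟩

lemma embF_inj (hn : 2 ≤ n) : Function.Injective (embF hn) := by
  intro a b h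
  exact Fin.ext (by simpa [embF, Fin.ext_iff] using h)

lemma embB_inj (hn : 2 ≤ n) : Function.Injective (embB hn) := by
  intro a b h
  simp only [embB, Fin.mk.injEq] at h
  exact Fin.ext (by omega)

/-- the extension of `F` to `(2n-1)`-tuples -/
def F2 (hn : 2 ≤ n) (F : (Fin n → X) → X) (x : Fin (2 * n - 1) → X) : X :=
  F (contract F 0 hn (by omega) x)

lemma wd (hn : 2 ≤ n) (F : (Fin n → X) → X) (hA : NAssoc hn F) :
    ∀ (i : ℕ) (hi : i ≤ n - 1) (x : Fin (2 * n - 1) → X),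
      F (contract F i hn hi x) = F2 hn F x := by
  intro i
  induction i with
  | zero => intro hi x; rfl
  | succ m ih =>
      intro hi x
      exact (hA m (by omega) x).symm.trans (ih (by omega) x)

/-- computation of `F2` by contracting the *last* `n` coordinates -/
lemma back_form (hn : 2 ≤ n) (F : (Fin n → X) → X) (hA : NAssoc hn F)
    (x : Fin (2 * n - 1) → X) :
    F2 hn F x
      = F (fun j : Fin n => if (j : ℕ) < n - 1 then x (embF hn j)
            else F (fun k => x (embB hn k))) := by
  rw [← wd hn F hA (n - 1) (le_refl _) x]
  congr 1
  funext j
  by_cases h1 : (j : ℕ) < n - 1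
  · simp [contract, h1, embF]
  · have h2 : (j : ℕ) = n - 1 := by have := j.isLt; omega
    simp [contract, h1, h2, embB]
/-- the front form of `F2` (contraction of the first `n` coordinates): definitional -/
lemma front_form (hn : 2 ≤ n) (F : (Fin n → X) → X) (x : Fin (2 * n - 1) → X) :
    F2 hn F x
      = F (fun j : Fin n => if (j : ℕ) = 0 then F (fun k => x (embF hn k))
            else x ⟨(j : ℕ) + n - 1, by have := j.isLt; omega⟩) := by
  unfold F2
  congr 1
  funext j
  by_cases h2 : (j : ℕ) = 0
  · have h1 : ¬ (j : ℕ) < 0 := by omega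
    simp only [contract, dif_neg h1, dif_pos h2, if_pos h2]
    congr 1
    funext k
    congr 1
    exact Fin.ext (by simp [embF])
  · have h1 : ¬ (j : ℕ) < 0 := by omega
    simp [contract, h1, h2]

lemma front_swap (hn : 2 ≤ n) (F : (Fin n → X) → X) (hS : NSym F)
    (a b : Fin (2 * n - 1)) (ha : (a : ℕ) < n) (hb : (b : ℕ) < n)
    (x : Fin (2 * n - 1) → X) :
    F2 hn F (x ∘ Equiv.swap a b) = F2 hn F x := by
  rw [front_form, front_form]
  congr 1
  funext j
  by_cases h2 : (j : ℕ) = 0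
  · rw [if_pos h2, if_pos h2]
    have key : (fun k => (x ∘ Equiv.swap a b) (embF hn k))
        = (fun k => x (embF hn k)) ∘ (Equiv.swap ⟨(a : ℕ), ha⟩ ⟨(b : ℕ), hb⟩) := by
      funext k
      simp only [Function.comp_apply]
      congr 1
      exact Function.Injective.swap_apply (embF_inj hn) ⟨(a : ℕ), ha⟩ ⟨(b : ℕ), hb⟩ k
    rw [key, hS]
  · rw [if_neg h2, if_neg h2]
    simp only [Function.comp_apply]
    congr 1
    apply Equiv.swap_apply_of_ne_of_ne <;>
      · apply Fin.ne_of_val_ne; simp only [embF, embB]; omega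

lemma back_swap (hn : 2 ≤ n) (F : (Fin n → X) → X) (hA : NAssoc hn F) (hS : NSym F)
    (a b : Fin (2 * n - 1)) (ha : n - 1 ≤ (a : ℕ)) (hb : n - 1 ≤ (b : ℕ))
    (x : Fin (2 * n - 1) → X) :
    F2 hn F (x ∘ Equiv.swap a b) = F2 hn F x := by
  have hae : a = embB hn ⟨(a : ℕ) - (n - 1), by have := a.isLt; omega⟩ :=
    Fin.ext (by simp only [embB]; omega)
  have hbe : b = embB hn ⟨(b : ℕ) - (n - 1), by have := b.isLt; omega⟩ :=
    Fin.ext (by simp only [embB]; omega)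
  rw [back_form hn F hA, back_form hn F hA]
  congr 1
  funext j
  by_cases h1 : (j : ℕ) < n - 1
  · rw [if_pos h1, if_pos h1]
    simp only [Function.comp_apply]
    congr 1
    apply Equiv.swap_apply_of_ne_of_ne <;>
      · apply Fin.ne_of_val_ne; simp only [embF]; omega
  · rw [if_neg h1, if_neg h1]
    have key : (fun k => (x ∘ Equiv.swap a b) (embB hn k))
        = (fun k => x (embB hn k)) ∘ (Equiv.swap ⟨(a : ℕ) - (n - 1), by have := a.isLt; omega⟩
            ⟨(b : ℕ) - (n - 1), by have := b.isLt; omega⟩) := by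
      funext k
      simp only [Function.comp_apply]
      congr 1
      conv_lhs => rw [hae, hbe]
      exact Function.Injective.swap_apply (embB_inj hn) _ _ k
    rw [key, hS]

lemma swap_invariant (hn : 2 ≤ n) (F : (Fin n → X) → X) (hA : NAssoc hn F) (hS : NSym F)
    (a b : Fin (2 * n - 1)) (x : Fin (2 * n - 1) → X) :
    F2 hn F (x ∘ Equiv.swap a b) = F2 hn F x := by
  -- helper for the mixed case
  have mixed : ∀ (a b : Fin (2 * n - 1)), (a : ℕ) < n - 1 → n ≤ (b : ℕ) →
      ∀ x : Fin (2 * n - 1) → X, F2 hn F (x ∘ Equiv.swap a b) = F2 hn F x := by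
    intro a b ha hb x
    have hnm : n - 1 < 2 * n - 1 := by omega
    set m : Fin (2 * n - 1) := ⟨n - 1, hnm⟩ with hm
    have hmv : (m : ℕ) = n - 1 := by rw [hm]
    have hab : b ≠ a := Fin.ne_of_val_ne (by omega)
    have hbm : b ≠ m := Fin.ne_of_val_ne (by omega)
    have hd : Equiv.swap a b = Equiv.swap a m * (Equiv.swap m b * Equiv.swap a m) := by
      have h1 : Equiv.swap ((Equiv.swap a m) m) ((Equiv.swap a m) b)
          = Equiv.swap a m * Equiv.swap m b * (Equiv.swap a m)⁻¹ :=
        Equiv.swap_apply_apply (Equiv.swap a m) m b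
      rw [Equiv.swap_apply_right, Equiv.swap_apply_of_ne_of_ne hab hbm, Equiv.swap_inv] at h1
      rw [h1, mul_assoc]
    have hcomp : x ∘ ⇑(Equiv.swap a b)
        = ((x ∘ ⇑(Equiv.swap a m)) ∘ ⇑(Equiv.swap m b)) ∘ ⇑(Equiv.swap a m) := by
      rw [hd]; funext j; simp [Equiv.Perm.mul_apply]
    rw [hcomp]
    rw [front_swap hn F hS a m (by omega) (by omega)]
    rw [back_swap hn F hA hS m b (by omega) (by omega)]
    rw [front_swap hn F hS a m (by omega) (by omega)]
  by_cases h0 : a = b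
  · subst h0; rw [Equiv.swap_self]; rfl
  rcases Nat.lt_or_ge (a : ℕ) n with ha | ha
  · rcases Nat.lt_or_ge (b : ℕ) n with hb | hb
    · exact front_swap hn F hS a b ha hb x
    · by_cases ha' : n - 1 ≤ (a : ℕ)
      · exact back_swap hn F hA hS a b ha' (by omega) x
      · exact mixed a b (by omega) hb x
  · rcases Nat.lt_or_ge (b : ℕ) n with hb | hb
    · by_cases hb' : n - 1 ≤ (b : ℕ)
      · exact back_swap hn F hA hS a b (by omega) hb' x
      · rw [Equiv.swap_comm]
        exact mixed b a (by omega) ha x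
    · exact back_swap hn F hA hS a b (by omega) (by omega) x

lemma F2_perm (hn : 2 ≤ n) (F : (Fin n → X) → X) (hA : NAssoc hn F) (hS : NSym F)
    (σ : Equiv.Perm (Fin (2 * n - 1))) (x : Fin (2 * n - 1) → X) :
    F2 hn F (x ∘ σ) = F2 hn F x := by
  revert x
  refine Equiv.Perm.swap_induction_on σ (fun x => rfl) ?_
  intro f a b hab ih x
  have h : x ∘ ⇑(Equiv.swap a b * f) = (x ∘ ⇑(Equiv.swap a b)) ∘ ⇑f := by
    funext j; simp [Equiv.Perm.mul_apply]
  rw [h, ih, swap_invariant hn F hA hS]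

/-- the involution of `Fin (2n-1)` swapping the blocks `[0,n-1)` and `[n-1,2n-2)`,
fixing the last coordinate. -/
def tau (hn : 2 ≤ n) : Fin (2 * n - 1) → Fin (2 * n - 1) := fun j =>
  if h1 : (j : ℕ) < n - 1 then ⟨(j : ℕ) + (n - 1), by omega⟩
  else if _h2 : (j : ℕ) < 2 * n - 2 then ⟨(j : ℕ) - (n - 1), by have := j.isLt; omega⟩
  else j

lemma tau_val (hn : 2 ≤ n) (j : Fin (2 * n - 1)) :
    ((tau hn j : Fin (2 * n - 1)) : ℕ)
      = if (j : ℕ) < n - 1 then (j : ℕ) + (n - 1)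
        else if (j : ℕ) < 2 * n - 2 then (j : ℕ) - (n - 1) else (j : ℕ) := by
  unfold tau
  split_ifs <;> simp [Fin.val_mk]

lemma tau_inv (hn : 2 ≤ n) : Function.Involutive (tau hn) := by
  intro j
  apply Fin.ext
  rw [tau_val, tau_val]
  have := j.isLt
  split_ifs <;> omega

lemma F2_tau (hn : 2 ≤ n) (F : (Fin n → X) → X) (hA : NAssoc hn F) (hS : NSym F)
    (x : Fin (2 * n - 1) → X) :
    F2 hn F (x ∘ tau hn) = F2 hn F x := by
  have h := F2_perm hn F hA hS (Function.Involutive.toPerm (tau hn) (tau_inv hn)) x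
  rwa [Function.Involutive.coe_toPerm] at h

/-- the last index of `Fin n` -/
def lastF (hn : 2 ≤ n) : Fin n := ⟨n - 1, by omega⟩

/-- key absorption identity at the last coordinate -/
lemma star_last (hn : 2 ≤ n) (F : (Fin n → X) → X) (hA : NAssoc hn F) (hS : NSym F)
    (a : X) (w : Fin n → X) :
    assocB F a (F w)
      = F (Function.update w (lastF hn) (assocB F a (w (lastF hn)))) := by
  classical
  set s : Fin (2 * n - 1) → X := fun j =>
    if (j : ℕ) < n - 1 then a else w ⟨(j : ℕ) - (n - 1), by have := j.isLt; omega⟩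
    with hs
  have hsval : ∀ j : Fin (2 * n - 1), s j =
      if (j : ℕ) < n - 1 then a else w ⟨(j : ℕ) - (n - 1), by have := j.isLt; omega⟩ :=
    fun _ => rfl
  have h1 : F2 hn F s = assocB F a (F w) := by
    rw [back_form hn F hA]
    show _ = F (fun j : Fin n => if (j : ℕ) < n - 1 then a else F w)
    congr 1
    funext j
    by_cases hj : (j : ℕ) < n - 1
    · rw [if_pos hj, if_pos hj, hsval]
      rw [if_pos (show ((embF hn j : Fin (2*n-1)) : ℕ) < n - 1 by simpa [embF] using hj)]
    · rw [if_neg hj, if_neg hj]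
      congr 1
      funext k
      rw [hsval]
      rw [if_neg (show ¬ ((embB hn k : Fin (2*n-1)) : ℕ) < n - 1 by simp [embB])]
      congr 1
      apply Fin.ext
      simp only [embB, Fin.val_mk]
      omega
  have h2 : F2 hn F (s ∘ tau hn)
      = F (Function.update w (lastF hn) (assocB F a (w (lastF hn)))) := by
    rw [back_form hn F hA]
    congr 1
    funext j
    by_cases hj : (j : ℕ) < n - 1
    · rw [if_pos hj]
      have hne : j ≠ lastF hn := Fin.ne_of_val_ne (by simp only [lastF, Fin.val_mk]; omega)
      rw [Function.update_of_ne hne]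
      show s (tau hn (embF hn j)) = w j
      rw [hsval, if_neg (by
        rw [tau_val]
        simp only [embF, Fin.val_mk]
        simp only [hj, ↓reduceIte]
        omega)]
      congr 1
      apply Fin.ext
      simp only [Fin.val_mk]
      rw [tau_val]
      simp only [embF, Fin.val_mk]
      simp only [hj, ↓reduceIte]
      omega
    · rw [if_neg hj]
      have hjl : j = lastF hn := Fin.ext (by have := j.isLt; simp only [lastF, Fin.val_mk]; omega)
      rw [hjl, Function.update_self]
      show F (fun k => s (tau hn (embB hn k))) = _
      have key : (fun k => s (tau hn (embB hn k)))
          = fun k : Fin n => if (k : ℕ) < n - 1 then a else w (lastF hn) := by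
        funext k
        have hkv : ((embB hn k : Fin (2*n-1)) : ℕ) = n - 1 + (k : ℕ) := by simp [embB]
        by_cases hk : (k : ℕ) < n - 1
        · rw [if_pos hk, hsval]
          rw [if_pos (by rw [tau_val, hkv]; have := k.isLt; split_ifs <;> omega)]
        · rw [if_neg hk, hsval]
          have hkn : (k : ℕ) = n - 1 := by have := k.isLt; omega
          rw [if_neg (by rw [tau_val, hkv]; have := k.isLt; split_ifs <;> omega)]
          congr 1
          apply Fin.ext
          simp only [Fin.val_mk]
          rw [tau_val, hkv]
          simp only [lastF, Fin.val_mk]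
          split_ifs <;> omega
      rw [key]
      rfl
  rw [← h1, ← F2_tau hn F hA hS s, h2]

/-- key absorption identity: absorbing `B a ·` into any coordinate -/
lemma star (hn : 2 ≤ n) (F : (Fin n → X) → X) (hA : NAssoc hn F) (hS : NSym F)
    (a : X) (w : Fin n → X) (i : Fin n) :
    assocB F a (F w) = F (Function.update w i (assocB F a (w i))) := by
  classical
  have hρl : Equiv.swap i (lastF hn) (lastF hn) = i := Equiv.swap_apply_right _ _
  have h := star_last hn F hA hS a (w ∘ Equiv.swap i (lastF hn))
  have hFw : F (w ∘ Equiv.swap i (lastF hn)) = F w := hS _ w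
  have hwl : (w ∘ Equiv.swap i (lastF hn)) (lastF hn) = w i := by
    simp only [Function.comp_apply, hρl]
  have hupd : Function.update (w ∘ Equiv.swap i (lastF hn)) (lastF hn) (assocB F a (w i))
      = (Function.update w i (assocB F a (w i))) ∘ Equiv.swap i (lastF hn) := by
    funext j
    by_cases hj : j = lastF hn
    · subst hj
      rw [Function.update_self, Function.comp_apply, hρl, Function.update_self]
    · have hρj : Equiv.swap i (lastF hn) j ≠ i := by
        intro hc
        exact hj ((Equiv.swap i (lastF hn)).injective (hc.trans hρl.symm))
      simp only [Function.comp_apply, Function.update_of_ne hj, Function.update_of_ne hρj]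
  rw [hFw, hwl, hupd] at h
  rw [h, hS (Equiv.swap i (lastF hn))]

lemma Bidem (hn : 2 ≤ n) (F : (Fin n → X) → X) (hI : NIdem F) (a : X) :
    assocB F a a = a := by
  unfold assocB
  have : (fun j : Fin n => if (j : ℕ) < n - 1 then a else a) = fun _ => a := by
    funext j; rw [ite_self]
  rw [this, hI]

/-- if `a` occurs among the entries of `w`, then `B a (F w) = F w` -/
lemma absorb (hn : 2 ≤ n) (F : (Fin n → X) → X) (hA : NAssoc hn F) (hS : NSym F)
    (hI : NIdem F) (w : Fin n → X) (i : Fin n) :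
    assocB F (w i) (F w) = F w := by
  classical
  rw [star hn F hA hS (w i) w i, Bidem hn F hI, Function.update_eq_self]

lemma absorb' (hn : 2 ≤ n) (F : (Fin n → X) → X) (hA : NAssoc hn F) (hS : NSym F)
    (hI : NIdem F) (a : X) (w : Fin n → X) (i : Fin n) (h : w i = a) :
    assocB F a (F w) = F w := by
  subst h
  exact absorb hn F hA hS hI w i

lemma ell_idem (hn : 2 ≤ n) (F : (Fin n → X) → X) (hA : NAssoc hn F) (hS : NSym F)
    (hI : NIdem F) (a z : X) :
    assocB F a (assocB F a z) = assocB F a z := by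
  exact absorb' hn F hA hS hI a
    (fun j : Fin n => if (j : ℕ) < n - 1 then a else z) ⟨0, by omega⟩
    (if_pos (by simp only [Fin.val_mk]; omega))

/-- `B x (B y z) = F2 (x,…,x,y,…,y,z)` -/
lemma two_blocks (hn : 2 ≤ n) (F : (Fin n → X) → X) (hA : NAssoc hn F) (x y z : X) :
    F2 hn F (fun j : Fin (2 * n - 1) =>
        if (j : ℕ) < n - 1 then x else if (j : ℕ) < 2 * n - 2 then y else z)
      = assocB F x (assocB F y z) := by
  rw [back_form hn F hA]
  show _ = F (fun j : Fin n => if (j : ℕ) < n - 1 then x else assocB F y z)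
  congr 1
  funext j
  by_cases hj : (j : ℕ) < n - 1
  · rw [if_pos hj, if_pos hj]
    have : ((embF hn j : Fin (2 * n - 1)) : ℕ) < n - 1 := by simpa [embF] using hj
    rw [if_pos this]
  · rw [if_neg hj, if_neg hj]
    unfold assocB
    congr 1
    funext k
    have h1 : ¬ ((embB hn k : Fin (2 * n - 1)) : ℕ) < n - 1 := by simp [embB]
    rw [if_neg h1]
    have h2 : ((embB hn k : Fin (2 * n - 1)) : ℕ) < 2 * n - 2 ↔ (k : ℕ) < n - 1 := by
      simp only [embB, Fin.val_mk]
      omega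
    by_cases hk : (k : ℕ) < n - 1
    · rw [if_pos (h2.mpr hk), if_pos hk]
    · rw [if_neg (fun hc => hk (h2.mp hc)), if_neg hk]

lemma ell_comm (hn : 2 ≤ n) (F : (Fin n → X) → X) (hA : NAssoc hn F) (hS : NSym F)
    (x y z : X) :
    assocB F x (assocB F y z) = assocB F y (assocB F x z) := by
  rw [← two_blocks hn F hA x y z, ← two_blocks hn F hA y x z]
  rw [← F2_tau hn F hA hS (fun j : Fin (2 * n - 1) =>
        if (j : ℕ) < n - 1 then y else if (j : ℕ) < 2 * n - 2 then x else z)]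
  congr 1
  funext j
  have hj := j.isLt
  show _ = (fun j : Fin (2*n-1) =>
      if (j : ℕ) < n - 1 then y else if (j : ℕ) < 2 * n - 2 then x else z) (tau hn j)
  by_cases h1 : (j : ℕ) < n - 1
  · have ht : ((tau hn j : Fin (2*n-1)) : ℕ) = (j : ℕ) + (n - 1) := by
      rw [tau_val, if_pos h1]
    simp only []
    rw [if_pos h1, ht]
    rw [if_neg (by omega), if_pos (by omega)]
  · by_cases h2 : (j : ℕ) < 2 * n - 2
    · have ht : ((tau hn j : Fin (2*n-1)) : ℕ) = (j : ℕ) - (n - 1) := by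
        rw [tau_val, if_neg h1, if_pos h2]
      simp only []
      rw [if_neg h1, if_pos h2, ht, if_pos (by omega)]
    · have ht : ((tau hn j : Fin (2*n-1)) : ℕ) = (j : ℕ) := by
        rw [tau_val, if_neg h1, if_neg h2]
      simp only []
      rw [if_neg h1, if_neg h2, ht, if_neg h1, if_neg h2]

lemma Bassoc (hn : 2 ≤ n) (F : (Fin n → X) → X) (hA : NAssoc hn F) (hS : NSym F)
    (hI : NIdem F) (x y z : X) :
    assocB F (assocB F x y) z = assocB F x (assocB F y z) := by
  classical
  set u := assocB F x y with hu
  set g : ℕ → Fin n → X := fun k j =>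
    if (j : ℕ) < k then u else if (j : ℕ) < n - 1 then y else z with hg
  have hg0 : F (g 0) = assocB F y z := by
    unfold assocB
    have : g 0 = fun j : Fin n => if (j : ℕ) < n - 1 then y else z := by
      funext j
      rw [hg]
      simp only []
      rw [if_neg (by omega)]
    rw [this]
  have hstep : ∀ m : ℕ, m + 1 ≤ n - 1 → F (g (m + 1)) = assocB F x (F (g m)) := by
    intro m hk2
    have hmn : m < n := by omega
    have hgm : g m ⟨m, hmn⟩ = y := by
      rw [hg]
      simp only [Fin.val_mk]
      rw [if_neg (by omega), if_pos (by omega)]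
    have hstar := star hn F hA hS x (g m) ⟨m, hmn⟩
    rw [hgm, ← hu] at hstar
    have hupd : Function.update (g m) ⟨m, hmn⟩ u = g (m + 1) := by
      funext j
      by_cases hjm : (j : ℕ) < m
      · have hne : j ≠ ⟨m, hmn⟩ := Fin.ne_of_val_ne (by simp only [Fin.val_mk]; omega)
        rw [Function.update_of_ne hne, hg]
        simp only []
        rw [if_pos hjm, if_pos (by omega)]
      · by_cases hje : (j : ℕ) = m
        · have heq : j = ⟨m, hmn⟩ := Fin.ext (by simp only [Fin.val_mk]; omega)
          rw [heq, Function.update_self, hg]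
          simp only [Fin.val_mk]
          rw [if_pos (by omega)]
        · have hne : j ≠ ⟨m, hmn⟩ := Fin.ne_of_val_ne (by simp only [Fin.val_mk]; omega)
          rw [Function.update_of_ne hne, hg]
          simp only []
          rw [if_neg (show ¬ ((j : ℕ) < m) by omega),
            if_neg (show ¬ ((j : ℕ) < m + 1) by omega)]
    rw [← hupd]
    exact hstar.symm
  have key : ∀ m : ℕ, m + 1 ≤ n - 1 → F (g (m + 1)) = assocB F x (assocB F y z) := by
    intro m
    induction m with
    | zero => intro h; rw [hstep 0 h, hg0]
    | succ p ih =>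
        intro h
        rw [hstep (p + 1) h, ih (by omega), ell_idem hn F hA hS hI]
  have hfin := key (n - 2) (by omega)
  rw [show n - 2 + 1 = n - 1 by omega] at hfin
  have hlast : g (n - 1) = fun j : Fin n => if (j : ℕ) < n - 1 then u else z := by
    funext j
    rw [hg]
    simp only []
    by_cases hj : (j : ℕ) < n - 1
    · rw [if_pos hj, if_pos hj]
    · rw [if_neg hj, if_neg hj, if_neg hj]
  rw [hlast] at hfin
  exact hfin

/-- the entries of `w` reindexed by `ℕ` (clamped at `n-1`) -/
def wnat (hn : 2 ≤ n) (w : Fin n → X) (m : ℕ) : X := w ⟨min m (n - 1), by omega⟩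

/-- left-nested fold `B(B(…B(w₀,w₁)…),w_m)` -/
def cfold (hn : 2 ≤ n) (F : (Fin n → X) → X) (w : Fin n → X) : ℕ → X
  | 0 => wnat hn w 0
  | m + 1 => assocB F (cfold hn F w m) (wnat hn w (m + 1))

lemma nExt_cfold (hn : 2 ≤ n) (F : (Fin n → X) → X) (hA : NAssoc hn F) (hS : NSym F)
    (hI : NIdem F) (w : Fin n → X) :
    nExt (Nat.le_of_succ_le hn) (assocB F) w = cfold hn F w (n - 1) := by
  classical
  set R : ℕ → X := fun m =>
    (List.ofFn (fun i : Fin (n - 1 - m) => wnat hn w (m + (i : ℕ)))).foldr (assocB F)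
      (wnat hn w (n - 1)) with hR
  have hR0 : nExt (Nat.le_of_succ_le hn) (assocB F) w = R 0 := by
    unfold nExt
    rw [hR]
    simp only [Nat.sub_zero]
    refine congrArg₂ (List.foldr (assocB F)) ?_ ?_
    · unfold wnat
      exact congrArg w (Fin.ext (by simp only [Fin.val_mk]; omega))
    · refine congrArg _ ?_
      funext i
      unfold wnat
      exact congrArg w (Fin.ext (by simp only [Fin.val_mk]; have := i.isLt; omega))
  have hRstep : ∀ m : ℕ, m < n - 1 → R m = assocB F (wnat hn w m) (R (m + 1)) := by
    intro m hm
    rw [hR]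
    simp only []
    have hlen : n - 1 - m = (n - 1 - (m + 1)) + 1 := by omega
    rw [List.ofFn_congr hlen, List.ofFn_succ, List.foldr_cons]
    refine congrArg₂ (assocB F) ?_ ?_
    · simp only [Fin.coe_cast, Fin.val_zero, Nat.add_zero]
    · refine congrArg _ (congrArg _ ?_)
      funext i
      refine congrArg _ ?_
      simp only [Fin.coe_cast, Fin.val_succ]
      omega
  have hRlast : R (n - 1) = wnat hn w (n - 1) := by
    rw [hR]
    simp only []
    have h0 : n - 1 - (n - 1) = 0 := by omega
    rw [List.ofFn_congr h0, List.ofFn_zero, List.foldr_nil]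
  have hchain : ∀ m : ℕ, m + 1 ≤ n - 1 → R 0 = assocB F (cfold hn F w m) (R (m + 1)) := by
    intro m
    induction m with
    | zero => intro h; rw [hRstep 0 (by omega)]; rfl
    | succ p ih =>
        intro h
        rw [ih (by omega), hRstep (p + 1) (by omega), ← Bassoc hn F hA hS hI]
        rfl
  have hfin := hchain (n - 2) (by omega)
  rw [show n - 2 + 1 = n - 1 by omega] at hfin
  rw [hR0, hfin, hRlast]
  rw [show n - 1 = (n - 2) + 1 by omega]
  rfl

/-- forward pass : `F w = F (c₀, c₁, …, c_{n-1})` -/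
lemma Fw_eq_Fc (hn : 2 ≤ n) (F : (Fin n → X) → X) (hA : NAssoc hn F) (hS : NSym F)
    (hI : NIdem F) (w : Fin n → X) :
    F w = F (fun j : Fin n => cfold hn F w (j : ℕ)) := by
  classical
  have claim : ∀ m : ℕ, m ≤ n - 1 →
      F (fun j : Fin n => if (j : ℕ) ≤ m then cfold hn F w (j : ℕ) else w j) = F w := by
    intro m
    induction m with
    | zero =>
        intro _
        congr 1
        funext j
        by_cases hj : (j : ℕ) ≤ 0
        · rw [if_pos hj, show (j : ℕ) = 0 from by omega]
          show wnat hn w 0 = w j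
          unfold wnat
          congr 1
          apply Fin.ext
          simp only [Fin.val_mk]
          omega
        · rw [if_neg hj]
    | succ m ih =>
        intro hm1
        have hmn : m + 1 < n := by omega
        set v := fun j : Fin n => if (j : ℕ) ≤ m then cfold hn F w (j : ℕ) else w j with hv
        have ihm := ih (by omega)
        have hvi : v ⟨m + 1, hmn⟩ = w ⟨m + 1, hmn⟩ := by
          rw [hv]; simp only [Fin.val_mk]; rw [if_neg (by omega)]
        have hstar := star hn F hA hS (cfold hn F w m) v ⟨m + 1, hmn⟩
        rw [hvi] at hstar
        have hcm : assocB F (cfold hn F w m) (w ⟨m + 1, hmn⟩) = cfold hn F w (m + 1) := by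
          show _ = assocB F (cfold hn F w m) (wnat hn w (m + 1))
          congr 1
          unfold wnat
          congr 1
          apply Fin.ext
          simp only [Fin.val_mk]
          omega
        have habs : assocB F (cfold hn F w m) (F v) = F v := by
          apply absorb' hn F hA hS hI _ v ⟨m, by omega⟩
          rw [hv]; simp only [Fin.val_mk]; rw [if_pos (by omega)]
        have hupd : Function.update v ⟨m + 1, hmn⟩ (cfold hn F w (m + 1))
            = fun j : Fin n => if (j : ℕ) ≤ m + 1 then cfold hn F w (j : ℕ) else w j := by
          funext j
          by_cases hje : j = (⟨m + 1, hmn⟩ : Fin n)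
          · rw [hje, Function.update_self]
            simp only [Fin.val_mk]
            rw [if_pos (by omega)]
          · have hjv : (j : ℕ) ≠ m + 1 :=
              fun hc => hje (Fin.ext (by simp only [Fin.val_mk]; exact hc))
            rw [Function.update_of_ne hje, hv]
            simp only []
            by_cases hjm : (j : ℕ) ≤ m
            · rw [if_pos hjm, if_pos (by omega)]
            · rw [if_neg hjm, if_neg (by omega)]
        rw [hcm, hupd] at hstar
        rw [← hstar, habs]
        exact ihm
  have hfin := claim (n - 1) (le_refl _)
  rw [← hfin]
  congr 1
  funext j
  rw [if_pos (by have := j.isLt; omega)]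

/-- backward pass : under commutativity, `F (c₀, …, c_{n-1}) = c_{n-1}` -/
lemma Fc_eq_T (hn : 2 ≤ n) (F : (Fin n → X) → X) (hA : NAssoc hn F) (hS : NSym F)
    (hI : NIdem F) (hcomm : ∀ x y : X, assocB F x y = assocB F y x) (w : Fin n → X) :
    F (fun j : Fin n => cfold hn F w (j : ℕ)) = cfold hn F w (n - 1) := by
  classical
  set T := cfold hn F w (n - 1) with hT
  have habs_c : ∀ m k : ℕ,
      assocB F (cfold hn F w m) (cfold hn F w (m + k)) = cfold hn F w (m + k) := by
    intro m k
    induction k with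
    | zero => exact Bidem hn F hI _
    | succ p ih =>
        show assocB F (cfold hn F w m)
            (assocB F (cfold hn F w (m + p)) (wnat hn w (m + p + 1))) = _
        rw [← Bassoc hn F hA hS hI, ih]
        rfl
  have hBT : ∀ m : ℕ, m ≤ n - 1 → assocB F T (cfold hn F w m) = T := by
    intro m hm
    rw [hcomm, hT]
    have h := habs_c m (n - 1 - m)
    rw [show m + (n - 1 - m) = n - 1 by omega] at h
    exact h
  have claim : ∀ m : ℕ, m ≤ n - 1 →
      F (fun j : Fin n => if (j : ℕ) < m then T else cfold hn F w (j : ℕ))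
        = F (fun j : Fin n => cfold hn F w (j : ℕ)) := by
    intro m
    induction m with
    | zero => intro _; rfl
    | succ m ih =>
        intro hm
        have ihm := ih (by omega)
        have hmn : m < n := by omega
        set d := fun j : Fin n => if (j : ℕ) < m then T else cfold hn F w (j : ℕ) with hd
        have hdval : ∀ j : Fin n, d j = if (j : ℕ) < m then T else cfold hn F w (j : ℕ) :=
          fun _ => rfl
        have hdm : d ⟨m, hmn⟩ = cfold hn F w m := by
          rw [hdval]; simp only [Fin.val_mk]; rw [if_neg (by omega)]
        have hstar := star hn F hA hS T d ⟨m, hmn⟩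
        rw [hdm, hBT m (by omega)] at hstar
        have habs : assocB F T (F d) = F d := by
          apply absorb' hn F hA hS hI T d ⟨n - 1, by omega⟩
          rw [hdval]; simp only [Fin.val_mk]; rw [if_neg (by omega), hT]
        have hupd : Function.update d ⟨m, hmn⟩ T
            = fun j : Fin n => if (j : ℕ) < m + 1 then T else cfold hn F w (j : ℕ) := by
          funext j
          by_cases hje : j = (⟨m, hmn⟩ : Fin n)
          · rw [hje, Function.update_self]
            simp only [Fin.val_mk]
            rw [if_pos (by omega)]
          · have hjv : (j : ℕ) ≠ m :=
              fun hc => hje (Fin.ext (by simp only [Fin.val_mk]; exact hc))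
            rw [Function.update_of_ne hje, hdval]
            by_cases hjm : (j : ℕ) < m
            · rw [if_pos hjm, if_pos (by omega)]
            · rw [if_neg hjm, if_neg (by omega)]
        rw [hupd] at hstar
        rw [← hstar, habs]
        exact ihm
  have h1 := claim (n - 1) (le_refl _)
  rw [← h1]
  have hconst : (fun j : Fin n => if (j : ℕ) < n - 1 then T else cfold hn F w (j : ℕ))
      = fun _ : Fin n => T := by
    funext j
    by_cases hj : (j : ℕ) < n - 1
    · rw [if_pos hj]
    · rw [if_neg hj, show (j : ℕ) = n - 1 from by have := j.isLt; omega, hT]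
  rw [hconst, hI]

end NaryBand

open NaryBand

/-- For a symmetric `n`-ary band `(X,F)` with associated binary
operation `B`, the following are equivalent: (i) `x ↦ ℓ_x` is injective;
(ii) `B` is commutative; (iii) `F` is the `n`-ary extension of `B`. -/
theorem stmt_7 {X : Type*} {n : ℕ} (hn : 2 ≤ n) (F : (Fin n → X) → X)
    (hA : NAssoc hn F) (hS : NSym F) (hI : NIdem F) :
    List.TFAE
      [Function.Injective (ell F),
       ∀ x y : X, assocB F x y = assocB F y x,
       F = nExt (by omega) (assocB F)] := by
  classical
  tfae_have 1 → 2 := by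
    intro h1 x y
    apply h1
    funext z
    show assocB F (assocB F x y) z = assocB F (assocB F y x) z
    rw [Bassoc hn F hA hS hI, Bassoc hn F hA hS hI, ell_comm hn F hA hS]
  tfae_have 2 → 1 := by
    intro h2 x y hxy
    have hx : assocB F x x = assocB F y x := congrFun hxy x
    have hy : assocB F x y = assocB F y y := congrFun hxy y
    calc x = assocB F x x := (Bidem hn F hI x).symm
    _ = assocB F y x := hx
    _ = assocB F x y := (h2 x y).symm
    _ = assocB F y y := hy
    _ = y := Bidem hn F hI y
  tfae_have 2 → 3 := by
    intro h2
    funext w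
    rw [Fw_eq_Fc hn F hA hS hI w, Fc_eq_T hn F hA hS hI h2 w,
      ← nExt_cfold hn F hA hS hI w]
  tfae_have 3 → 2 := by
    intro h3 x y
    -- the tuple (x, y, y, …, y)
    set q := fun j : Fin n => if (j : ℕ) = 0 then x else y with hq
    have hqval : ∀ j : Fin n, q j = if (j : ℕ) = 0 then x else y := fun _ => rfl
    have h0n : (0 : ℕ) < n := by omega
    -- F q = B y x via symmetry
    have hFq1 : F q = assocB F y x := by
      have hswap : q = (fun j : Fin n => if (j : ℕ) < n - 1 then y else x)
          ∘ (Equiv.swap ⟨0, h0n⟩ (lastF hn)) := by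
        funext j
        simp only [Function.comp_apply]
        rw [hqval]
        by_cases hj0 : j = (⟨0, h0n⟩ : Fin n)
        · rw [hj0, Equiv.swap_apply_left]
          rw [if_pos (by simp only [Fin.val_mk])]
          rw [if_neg (by simp only [lastF, Fin.val_mk]; omega)]
        · by_cases hjl : j = lastF hn
          · rw [hjl, Equiv.swap_apply_right]
            rw [if_neg (by simp only [lastF, Fin.val_mk]; omega)]
            rw [if_pos (by simp only [Fin.val_mk]; omega)]
          · rw [Equiv.swap_apply_of_ne_of_ne hj0 hjl]
            have hv0 : (j : ℕ) ≠ 0 :=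
              fun hc => hj0 (Fin.ext (by simp only [Fin.val_mk]; exact hc))
            have hvl : (j : ℕ) ≠ n - 1 :=
              fun hc => hjl (Fin.ext (by simp only [lastF, Fin.val_mk]; exact hc))
            rw [if_neg hv0, if_pos (by have := j.isLt; omega)]
      rw [hswap, hS]
      rfl
    -- F q = B x y via (iii)
    have hcq : ∀ m : ℕ, 1 ≤ m → cfold hn F q m = assocB F x y := by
      intro m
      induction m with
      | zero => omega
      | succ p ih =>
          intro _
          have hwy : wnat hn q (p + 1) = y := by
            unfold wnat
            rw [hqval]
            rw [if_neg (by simp only [Fin.val_mk]; omega)]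
          by_cases hp : p = 0
          · subst hp
            show assocB F (cfold hn F q 0) (wnat hn q 1) = _
            rw [hwy]
            show assocB F (wnat hn q 0) y = _
            have hwx : wnat hn q 0 = x := by
              unfold wnat
              rw [hqval]
              rw [if_pos (by simp only [Fin.val_mk]; omega)]
            rw [hwx]
          · show assocB F (cfold hn F q p) (wnat hn q (p + 1)) = _
            rw [hwy, ih (by omega), Bassoc hn F hA hS hI, Bidem hn F hI]
    have hFq2 : F q = assocB F x y := by
      have h := congrFun h3 q
      exact h.trans ((nExt_cfold hn F hA hS hI q).trans (hcq (n - 1) (by omega)))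
    rw [← hFq1, ← hFq2]
  tfae_finish
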